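/- arXiv:1809.09385 — 3 statements merged into one kernel-verified Lean document; each statement's English description precedes it below -/
import Mathlib

section
/- For every complex λ with Im λ > 0, (1/π) ∫_ℝ (1+ix)^{(iλ−1)/2 − n} (1−ix)^{(iλ−1)/2 + n} dx = ((iλ−1)/2 + n)/((iλ−1)/2 − n + 1) · (1/π) ∫_ℝ (1+ix)^{(iλ−1)/2 − n + 1} (1−ix)^{(iλ−1)/2 + n − 1} dx, for every half-integer n ≥ 1 (assuming both integrals converge absolutely). -/
open MeasureTheory Complex Filter Real

lemma stmt9_norm_cpow_le (z w : ℂ) :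
    ‖z ^ w‖ ≤ ‖z‖ ^ w.re * Real.exp (Real.pi * |w.im|) := by
  refine (Complex.norm_cpow_le z w).trans ?_
  rw [div_eq_mul_inv, ← Real.exp_neg]
  gcongr
  calc -(z.arg * w.im) ≤ |z.arg * w.im| := neg_le_abs _
      _ = |z.arg| * |w.im| := abs_mul _ _
      _ ≤ Real.pi * |w.im| := by gcongr; exact Complex.abs_arg_le_pi z

lemma stmt9_abs_aux (x : ℝ) : ‖1 + Complex.I * x‖ = Real.sqrt (1 + x^2) := by
  rw [Complex.norm_def, Complex.normSq_apply]
  simp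
  ring_nf

lemma stmt9_abs_aux' (x : ℝ) : ‖1 - Complex.I * x‖ = Real.sqrt (1 + x^2) := by
  rw [Complex.norm_def, Complex.normSq_apply]
  simp
  ring_nf

lemma stmt9_tendsto (w₁ w₂ : ℂ) (hr : w₁.re + w₂.re < 0) (lf : Filter ℝ)
    (habs : Tendsto (fun x : ℝ => |x|) lf atTop) :
    Tendsto (fun x : ℝ => (1 + Complex.I * x) ^ w₁ * (1 - Complex.I * x) ^ w₂) lf (nhds 0) := by
  set C := Real.exp (Real.pi * |w₁.im|) * Real.exp (Real.pi * |w₂.im|) with hC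
  have hs : Tendsto (fun x : ℝ => Real.sqrt (1 + x^2)) lf atTop := by
    refine tendsto_atTop_mono (fun x => ?_) habs
    rw [← Real.sqrt_sq_eq_abs]
    exact Real.sqrt_le_sqrt (by nlinarith)
  have h0 : Tendsto (fun x : ℝ => Real.sqrt (1 + x^2) ^ (w₁.re + w₂.re) * C) lf (nhds 0) := by
    have := ((tendsto_rpow_neg_atTop (y := -(w₁.re + w₂.re)) (by linarith)).comp hs).mul_const C
    simpa using this
  refine squeeze_zero_norm (fun x => ?_) h0
  have hsp : 0 < Real.sqrt (1 + x^2) := Real.sqrt_pos.mpr (by positivity)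
  calc ‖(1 + Complex.I * x) ^ w₁ * (1 - Complex.I * x) ^ w₂‖
      = ‖(1 + Complex.I * x) ^ w₁‖ * ‖(1 - Complex.I * x) ^ w₂‖ := norm_mul _ _
    _ ≤ (‖1 + Complex.I * x‖ ^ w₁.re * Real.exp (Real.pi * |w₁.im|)) *
        (‖1 - Complex.I * x‖ ^ w₂.re * Real.exp (Real.pi * |w₂.im|)) := by
        exact mul_le_mul (stmt9_norm_cpow_le _ _) (stmt9_norm_cpow_le _ _) (norm_nonneg _)
          (by positivity)
    _ = Real.sqrt (1 + x^2) ^ (w₁.re + w₂.re) * C := by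
        rw [stmt9_abs_aux, stmt9_abs_aux', Real.rpow_add hsp, hC]; ring

theorem stmt9 (l : ℂ) (hl : 0 < l.im) (n : ℝ) (hn : ∃ m : ℤ, n = (m:ℝ)/2) (hn1 : 1 ≤ n)
    (h1 : MeasureTheory.Integrable (fun x : ℝ =>
      (1 + Complex.I * (x:ℂ)) ^ ((Complex.I * l - 1)/2 - (n:ℂ)) *
      (1 - Complex.I * (x:ℂ)) ^ ((Complex.I * l - 1)/2 + (n:ℂ))))
    (h2 : MeasureTheory.Integrable (fun x : ℝ =>
      (1 + Complex.I * (x:ℂ)) ^ ((Complex.I * l - 1)/2 - (n:ℂ) + 1) *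
      (1 - Complex.I * (x:ℂ)) ^ ((Complex.I * l - 1)/2 + (n:ℂ) - 1))) :
    (1/(Real.pi : ℂ)) * ∫ x : ℝ,
        (1 + Complex.I * (x:ℂ)) ^ ((Complex.I * l - 1)/2 - (n:ℂ)) *
        (1 - Complex.I * (x:ℂ)) ^ ((Complex.I * l - 1)/2 + (n:ℂ))
      = (((Complex.I * l - 1)/2 + (n:ℂ)) / ((Complex.I * l - 1)/2 - (n:ℂ) + 1)) *
        ((1/(Real.pi : ℂ)) * ∫ x : ℝ,
          (1 + Complex.I * (x:ℂ)) ^ ((Complex.I * l - 1)/2 - (n:ℂ) + 1) *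
          (1 - Complex.I * (x:ℂ)) ^ ((Complex.I * l - 1)/2 + (n:ℂ) - 1)) := by
  set a : ℂ := (Complex.I * l - 1)/2 - (n:ℂ) with ha
  set b : ℂ := (Complex.I * l - 1)/2 + (n:ℂ) with hb
  -- real-part facts
  have hab : a + 1 + b = Complex.I * l := by rw [ha, hb]; ring
  have hre : (a+1).re + b.re = -l.im := by
    rw [← Complex.add_re, hab]
    simp [Complex.add_re, Complex.mul_re]
  have hval : (2:ℂ) * (a+1) = Complex.I * l + 1 - 2*(n:ℂ) := by rw [ha]; ring
  have hvre : ((2:ℂ) * (a+1)).re = -l.im + 1 - 2*n := by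
    rw [hval]; simp [Complex.add_re, Complex.sub_re, Complex.mul_re]
  have hne : a + 1 ≠ 0 := by
    intro h
    rw [h, mul_zero] at hvre
    simp only [Complex.zero_re] at hvre
    linarith
  -- derivatives
  have hu : ∀ x : ℝ, HasDerivAt (fun y : ℝ => (1 + Complex.I * (y:ℂ)) ^ (a+1))
      ((a+1) * (1 + Complex.I * (x:ℂ)) ^ a * Complex.I) x := by
    intro x
    have hin : HasDerivAt (fun z : ℂ => 1 + Complex.I * z) Complex.I (x:ℂ) := by
      simpa using ((hasDerivAt_id ((x:ℝ):ℂ)).const_mul Complex.I).const_add 1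
    have h0 : (1 + Complex.I * (x:ℂ)) ∈ Complex.slitPlane := by
      refine Complex.mem_slitPlane_iff.mpr (Or.inl ?_)
      simp
    have := (HasDerivAt.cpow_const (c := a+1) hin h0).comp_ofReal
    simpa using this
  have hv : ∀ x : ℝ, HasDerivAt (fun y : ℝ => (1 - Complex.I * (y:ℂ)) ^ b)
      (b * (1 - Complex.I * (x:ℂ)) ^ (b-1) * (-Complex.I)) x := by
    intro x
    have hin : HasDerivAt (fun z : ℂ => 1 - Complex.I * z) (-Complex.I) (x:ℂ) := by
      simpa using HasDerivAt.const_sub 1 ((hasDerivAt_id ((x:ℝ):ℂ)).const_mul Complex.I)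
    have h0 : (1 - Complex.I * (x:ℂ)) ∈ Complex.slitPlane := by
      refine Complex.mem_slitPlane_iff.mpr (Or.inl ?_)
      simp
    have := (HasDerivAt.cpow_const (c := b) hin h0).comp_ofReal
    simpa using this
  -- integrability
  have huv' : Integrable ((fun x : ℝ => (1 + Complex.I * (x:ℂ)) ^ (a+1)) *
      (fun x : ℝ => b * (1 - Complex.I * (x:ℂ)) ^ (b-1) * (-Complex.I))) := by
    refine (h2.const_mul (b * (-Complex.I))).congr (Filter.Eventually.of_forall fun x => ?_)
    simp only [Pi.mul_apply]
    ring
  have hu'v : Integrable ((fun x : ℝ => (a+1) * (1 + Complex.I * (x:ℂ)) ^ a * Complex.I) *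
      (fun x : ℝ => (1 - Complex.I * (x:ℂ)) ^ b)) := by
    refine (h1.const_mul ((a+1) * Complex.I)).congr (Filter.Eventually.of_forall fun x => ?_)
    simp only [Pi.mul_apply]
    ring
  -- boundary terms
  have hrlt : (a+1).re + b.re < 0 := by rw [hre]; linarith
  have htop : Tendsto ((fun x : ℝ => (1 + Complex.I * (x:ℂ)) ^ (a+1)) *
      (fun x : ℝ => (1 - Complex.I * (x:ℂ)) ^ b)) atTop (nhds 0) :=
    stmt9_tendsto (a+1) b hrlt atTop tendsto_abs_atTop_atTop
  have hbot : Tendsto ((fun x : ℝ => (1 + Complex.I * (x:ℂ)) ^ (a+1)) *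
      (fun x : ℝ => (1 - Complex.I * (x:ℂ)) ^ b)) atBot (nhds 0) :=
    stmt9_tendsto (a+1) b hrlt atBot tendsto_abs_atBot_atTop
  have key := MeasureTheory.integral_mul_deriv_eq_deriv_mul (fun x _ => hu x) (fun x _ => hv x) huv' hu'v hbot htop
  have e1 : ∀ x : ℝ, (1 + Complex.I * (x:ℂ)) ^ (a+1) * (b * (1 - Complex.I * (x:ℂ)) ^ (b-1) * (-Complex.I)) =
      (b * (-Complex.I)) * ((1 + Complex.I * (x:ℂ)) ^ (a+1) * (1 - Complex.I * (x:ℂ)) ^ (b-1)) := fun x => by ring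
  have e2 : ∀ x : ℝ, ((a+1) * (1 + Complex.I * (x:ℂ)) ^ a * Complex.I) * (1 - Complex.I * (x:ℂ)) ^ b =
      ((a+1) * Complex.I) * ((1 + Complex.I * (x:ℂ)) ^ a * (1 - Complex.I * (x:ℂ)) ^ b) := fun x => by ring
  simp only [e1, e2, MeasureTheory.integral_const_mul] at key
  set T1 := ∫ x : ℝ, (1 + Complex.I * (x:ℂ)) ^ a * (1 - Complex.I * (x:ℂ)) ^ b with hT1
  set T2 := ∫ x : ℝ, (1 + Complex.I * (x:ℂ)) ^ (a+1) * (1 - Complex.I * (x:ℂ)) ^ (b-1) with hT2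
  have hmain : (a+1) * T1 = b * T2 := by
    have hI : Complex.I * Complex.I = -1 := Complex.I_mul_I
    linear_combination (-Complex.I) * key - (b * T2 - (a+1) * T1) * hI
  have hdiv : T1 = b / (a+1) * T2 := by
    field_simp
    linear_combination hmain
  rw [hdiv]; ring
end

section
/- Let 0 < ε < 1/2 and let n ∈ (1/2)ℕ with n ≥ 3. Define Q_n(λ) = π^{−1/2} ∏ (iλ − j)/(iλ + j), where the product is over j = 1/2, 3/2, …, n − 1/2 if n is an integer (and j = 1, 2, …, n − 1/2 if n is a half-odd-integer). Then for α = 0,1,2,3 and all λ with |Im λ| < 1/2 − ε, |d^α/dλ^α Q_n(λ)| ≤ C_{ε,α} (1+n)^6 (1+|λ|)^{−α}. -/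
open Complex Finset Filter

noncomputable section Qaux

/-- the constant `π^{-1/2}`. -/
def cpi : ℂ := (Real.pi : ℂ) ^ (-(1/2 : ℂ))

/-- one Blaschke-type factor. -/
def ff (jf : ℕ → ℝ) (k : ℕ) (z : ℂ) : ℂ :=
  (Complex.I * z - (jf k : ℝ)) / (Complex.I * z + (jf k : ℝ))

/-- logarithmic derivative term. -/
def gg (jf : ℕ → ℝ) (k : ℕ) (z : ℂ) : ℂ :=
  (-2 * Complex.I * (jf k : ℝ)) / (z ^ 2 + ((jf k : ℝ) : ℂ) ^ 2)

def gg1 (jf : ℕ → ℝ) (k : ℕ) (z : ℂ) : ℂ :=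
  (4 * Complex.I * (jf k : ℝ) * z) / (z ^ 2 + ((jf k : ℝ) : ℂ) ^ 2) ^ 2

def gg2 (jf : ℕ → ℝ) (k : ℕ) (z : ℂ) : ℂ :=
  (4 * Complex.I * (jf k : ℝ) * (((jf k : ℝ) : ℂ) ^ 2 - 3 * z ^ 2)) /
    (z ^ 2 + ((jf k : ℝ) : ℂ) ^ 2) ^ 3

def QQ (jf : ℕ → ℝ) (K : ℕ) (z : ℂ) : ℂ := cpi * ∏ k ∈ range K, ff jf k z
def LL (jf : ℕ → ℝ) (K : ℕ) (z : ℂ) : ℂ := ∑ k ∈ range K, gg jf k z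
def LL1 (jf : ℕ → ℝ) (K : ℕ) (z : ℂ) : ℂ := ∑ k ∈ range K, gg1 jf k z
def LL2 (jf : ℕ → ℝ) (K : ℕ) (z : ℂ) : ℂ := ∑ k ∈ range K, gg2 jf k z

variable {jf : ℕ → ℝ}

lemma den1_ne (hj : ∀ k, 1/2 ≤ jf k) (k : ℕ) {z : ℂ} (hz : |z.im| < 1/2) :
    Complex.I * z + ((jf k : ℝ) : ℂ) ≠ 0 := by
  intro h
  have h2 : (Complex.I * z + ((jf k : ℝ) : ℂ)).re = 0 := by rw [h]; simp
  simp [Complex.add_re, Complex.mul_re] at h2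
  have := abs_lt.mp hz
  have := hj k
  linarith

lemma den2_ne (hj : ∀ k, 1/2 ≤ jf k) (k : ℕ) {z : ℂ} (hz : |z.im| < 1/2) :
    Complex.I * z - ((jf k : ℝ) : ℂ) ≠ 0 := by
  intro h
  have h2 : (Complex.I * z - ((jf k : ℝ) : ℂ)).re = 0 := by rw [h]; simp
  simp [Complex.sub_re, Complex.mul_re] at h2
  have := abs_lt.mp hz
  have := hj k
  linarith

lemma den3_ne (hj : ∀ k, 1/2 ≤ jf k) (k : ℕ) {z : ℂ} (hz : |z.im| < 1/2) :
    z ^ 2 + ((jf k : ℝ) : ℂ) ^ 2 ≠ 0 := by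
  have h1 := den1_ne hj k hz
  have h2 := den2_ne hj k hz
  have hfac : z ^ 2 + ((jf k : ℝ) : ℂ) ^ 2 =
      -((Complex.I * z - ((jf k : ℝ) : ℂ)) * (Complex.I * z + ((jf k : ℝ) : ℂ))) := by
    have : Complex.I ^ 2 = -1 := Complex.I_sq
    ring_nf
    rw [this]; ring
  rw [hfac]
  exact neg_ne_zero.mpr (mul_ne_zero h2 h1)


lemma hasDerivAt_ff (hj : ∀ k, 1/2 ≤ jf k) (k : ℕ) {z : ℂ} (hz : |z.im| < 1/2) :
    HasDerivAt (ff jf k) (ff jf k z * gg jf k z) z := by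
  have h1 := den1_ne hj k hz
  have h2 := den2_ne hj k hz
  have h3 := den3_ne hj k hz
  have hdn : HasDerivAt (fun z : ℂ => Complex.I * z - ((jf k : ℝ) : ℂ)) Complex.I z := by
    simpa using ((hasDerivAt_id z).const_mul Complex.I).sub_const ((jf k : ℝ) : ℂ)
  have hdd : HasDerivAt (fun z : ℂ => Complex.I * z + ((jf k : ℝ) : ℂ)) Complex.I z := by
    simpa using ((hasDerivAt_id z).const_mul Complex.I).add_const ((jf k : ℝ) : ℂ)
  have H := hdn.div hdd h1
  refine H.congr_deriv (Eq.symm ?_)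
  unfold ff gg
  field_simp
  ring_nf
  simp only [show (Complex.I)^3 = -Complex.I by rw [pow_succ, Complex.I_sq]; ring,
    show (Complex.I)^4 = 1 by rw [show (4:ℕ)=2+2 from rfl, pow_add, Complex.I_sq]; ring, Complex.I_sq]
  ring

lemma hasDerivAt_prodff (hj : ∀ k, 1/2 ≤ jf k) (n : ℕ) {z : ℂ} (hz : |z.im| < 1/2) :
    HasDerivAt (fun z => ∏ k ∈ range n, ff jf k z)
      ((∏ k ∈ range n, ff jf k z) * ∑ k ∈ range n, gg jf k z) z := by
  induction n with
  | zero => simpa using hasDerivAt_const z (1 : ℂ)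
  | succ n ih =>
    have H := ih.fun_mul (hasDerivAt_ff hj n hz)
    simp only [prod_range_succ, sum_range_succ]
    refine H.congr_deriv (Eq.symm ?_)
    ring

lemma hasDerivAt_QQ (hj : ∀ k, 1/2 ≤ jf k) (K : ℕ) {z : ℂ} (hz : |z.im| < 1/2) :
    HasDerivAt (QQ jf K) (QQ jf K z * LL jf K z) z := by
  have H := (hasDerivAt_prodff hj K hz).const_mul cpi
  refine H.congr_deriv (Eq.symm ?_)
  unfold QQ LL
  ring

lemma hasDerivAt_gg (hj : ∀ k, 1/2 ≤ jf k) (k : ℕ) {z : ℂ} (hz : |z.im| < 1/2) :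
    HasDerivAt (gg jf k) (gg1 jf k z) z := by
  have h3 := den3_ne hj k hz
  have hden : HasDerivAt (fun z : ℂ => z ^ 2 + ((jf k : ℝ) : ℂ) ^ 2) (2 * z) z := by
    simpa using (hasDerivAt_pow 2 z).add_const (((jf k : ℝ) : ℂ) ^ 2)
  have H := (hasDerivAt_const z (-2 * Complex.I * ((jf k : ℝ) : ℂ))).div hden h3
  refine H.congr_deriv (Eq.symm ?_)
  unfold gg1
  field_simp
  ring

lemma hasDerivAt_gg1 (hj : ∀ k, 1/2 ≤ jf k) (k : ℕ) {z : ℂ} (hz : |z.im| < 1/2) :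
    HasDerivAt (gg1 jf k) (gg2 jf k z) z := by
  have h3 := den3_ne hj k hz
  have h3' : (z ^ 2 + ((jf k : ℝ) : ℂ) ^ 2) ^ 2 ≠ 0 := pow_ne_zero _ h3
  have hden0 : HasDerivAt (fun z : ℂ => z ^ 2 + ((jf k : ℝ) : ℂ) ^ 2) (2 * z) z := by
    simpa using (hasDerivAt_pow 2 z).add_const (((jf k : ℝ) : ℂ) ^ 2)
  have hden : HasDerivAt (fun z : ℂ => (z ^ 2 + ((jf k : ℝ) : ℂ) ^ 2) ^ 2)
      (2 * (z ^ 2 + ((jf k : ℝ) : ℂ) ^ 2) ^ 1 * (2 * z)) z := by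
    simpa using hden0.fun_pow 2
  have hnum : HasDerivAt (fun z : ℂ => 4 * Complex.I * ((jf k : ℝ) : ℂ) * z)
      (4 * Complex.I * ((jf k : ℝ) : ℂ)) z := by
    simpa using (hasDerivAt_id z).const_mul (4 * Complex.I * ((jf k : ℝ) : ℂ))
  have H := hnum.div hden h3'
  refine H.congr_deriv (Eq.symm ?_)
  unfold gg2
  field_simp
  ring

lemma hasDerivAt_LL (hj : ∀ k, 1/2 ≤ jf k) (K : ℕ) {z : ℂ} (hz : |z.im| < 1/2) :
    HasDerivAt (LL jf K) (LL1 jf K z) z :=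
  HasDerivAt.fun_sum fun k _ => hasDerivAt_gg hj k hz

lemma hasDerivAt_LL1 (hj : ∀ k, 1/2 ≤ jf k) (K : ℕ) {z : ℂ} (hz : |z.im| < 1/2) :
    HasDerivAt (LL1 jf K) (LL2 jf K z) z :=
  HasDerivAt.fun_sum fun k _ => hasDerivAt_gg1 hj k hz


lemma cpi_norm : ‖cpi‖ ≤ 1 := by
  rw [cpi, Complex.norm_cpow_eq_rpow_re_of_pos Real.pi_pos]
  apply Real.rpow_le_one_of_one_le_of_nonpos
  · linarith [Real.pi_gt_three]
  · simp

lemma factor_lower (hj : ∀ k, 1/2 ≤ jf k) (k : ℕ) {z : ℂ} {ε : ℝ} (hε0 : 0 < ε)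
    (hz : |z.im| < 1/2 - ε) :
    (|z.re| + (jf k - 1/2 + ε)) ^ 2 / 4 ≤ ‖z ^ 2 + ((jf k : ℝ) : ℂ) ^ 2‖ := by
  have hj' := hj k
  have hy := abs_lt.mp hz
  have hfac : z ^ 2 + ((jf k : ℝ) : ℂ) ^ 2 =
      (z - Complex.I * ((jf k : ℝ) : ℂ)) * (z + Complex.I * ((jf k : ℝ) : ℂ)) := by
    ring_nf
    rw [Complex.I_sq]
    ring
  rw [hfac, norm_mul]
  have key : ∀ w : ℂ, w = z - Complex.I * ((jf k : ℝ) : ℂ) ∨ w = z + Complex.I * ((jf k : ℝ) : ℂ) →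
      (|z.re| + (jf k - 1/2 + ε)) / 2 ≤ ‖w‖ := by
    intro w hw
    have hre : |z.re| ≤ ‖w‖ := by
      have h := Complex.abs_re_le_norm w
      have : w.re = z.re := by rcases hw with h' | h' <;> simp [h']
      rw [this] at h
      simpa using h
    have him : jf k - 1/2 + ε ≤ ‖w‖ := by
      have h := Complex.abs_im_le_norm w
      have habs : jf k - |z.im| ≤ |w.im| := by
        rcases hw with h' | h'
        · have h'' : w.im = z.im - jf k := by simp [h']
          rw [h'']
          cases abs_cases z.im <;> cases abs_cases (z.im - jf k) <;> linarith
        · have h'' : w.im = z.im + jf k := by simp [h']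
          rw [h'']
          cases abs_cases z.im <;> cases abs_cases (z.im + jf k) <;> linarith
      have : |z.im| ≤ 1/2 - ε := le_of_lt hz
      linarith
    linarith
  have h1 := key _ (Or.inl rfl)
  have h2 := key _ (Or.inr rfl)
  have hnn : 0 ≤ (|z.re| + (jf k - 1/2 + ε)) / 2 := by
    have := abs_nonneg z.re
    linarith
  calc (|z.re| + (jf k - 1/2 + ε)) ^ 2 / 4
      = ((|z.re| + (jf k - 1/2 + ε)) / 2) * ((|z.re| + (jf k - 1/2 + ε)) / 2) := by ring
    _ ≤ ‖z - Complex.I * ((jf k : ℝ) : ℂ)‖ * ‖z + Complex.I * ((jf k : ℝ) : ℂ)‖ :=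
        mul_le_mul h1 h2 hnn (le_trans hnn h1)

lemma sq_le_imp {u v : ℝ} (hu : 0 ≤ u) (hv : 0 ≤ v) (h : u ^ 2 ≤ v ^ 2) : u ≤ v := by
  nlinarith

lemma ff_bound (hj : ∀ k, 1/2 ≤ jf k) (k : ℕ) {z : ℂ} {ε : ℝ} (hε0 : 0 < ε) (hε2 : ε < 1/2)
    (hz : |z.im| < 1/2 - ε) :
    ‖ff jf k z‖ ≤ (jf k + (1/2 - ε)) / (jf k - (1/2 - ε)) := by
  have hj' := hj k
  have hy := abs_lt.mp hz
  have e1 : Complex.I * (z + Complex.I * ((jf k : ℝ) : ℂ)) = Complex.I * z - ((jf k : ℝ) : ℂ) := by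
    rw [mul_add, ← mul_assoc, Complex.I_mul_I]; ring
  have e2 : Complex.I * (z - Complex.I * ((jf k : ℝ) : ℂ)) = Complex.I * z + ((jf k : ℝ) : ℂ) := by
    rw [mul_sub, ← mul_assoc, Complex.I_mul_I]; ring
  have hval : ‖ff jf k z‖ = ‖z + Complex.I * ((jf k : ℝ) : ℂ)‖ / ‖z - Complex.I * ((jf k : ℝ) : ℂ)‖ := by
    rw [ff, ← e1, ← e2, norm_div, norm_mul, norm_mul, Complex.norm_I, one_mul, one_mul]
  rw [hval]
  set u := ‖z + Complex.I * ((jf k : ℝ) : ℂ)‖ with hudef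
  set v := ‖z - Complex.I * ((jf k : ℝ) : ℂ)‖ with hvdef
  have hu2 : u ^ 2 = z.re ^ 2 + (z.im + jf k) ^ 2 := by
    rw [hudef, Complex.sq_norm, Complex.normSq_apply]
    simp
    ring
  have hv2 : v ^ 2 = z.re ^ 2 + (z.im - jf k) ^ 2 := by
    rw [hvdef, Complex.sq_norm, Complex.normSq_apply]
    simp
    ring
  have hv0 : 0 < v := by
    have h2 : (0:ℝ) < v ^ 2 := by rw [hv2]; nlinarith
    nlinarith [norm_nonneg (z - Complex.I * ((jf k : ℝ) : ℂ))]
  have hu0 : 0 ≤ u := norm_nonneg _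
  have hb0 : 0 < jf k - (1/2 - ε) := by linarith
  rw [div_le_div_iff₀ hv0 hb0]
  apply sq_le_imp (mul_nonneg hu0 hb0.le) (mul_nonneg (by linarith) hv0.le)
  have expand1 : (u * (jf k - (1/2 - ε))) ^ 2 = u ^ 2 * (jf k - (1/2 - ε)) ^ 2 := by ring
  have expand2 : ((jf k + (1/2 - ε)) * v) ^ 2 = (jf k + (1/2 - ε)) ^ 2 * v ^ 2 := by ring
  rw [expand1, expand2, hu2, hv2]
  nlinarith [sq_nonneg z.re, mul_nonneg (mul_nonneg (by linarith : (0:ℝ) ≤ jf k)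
      (by linarith : (0:ℝ) ≤ (1/2 - ε) - z.im))
      (by nlinarith : (0:ℝ) ≤ jf k ^ 2 - (1/2 - ε) * z.im),
    mul_nonneg (sq_nonneg z.re) (mul_nonneg (by linarith : (0:ℝ) ≤ jf k) (by linarith : (0:ℝ) ≤ 1/2 - ε))]

lemma gg_bound (hj : ∀ k, 1/2 ≤ jf k) (k : ℕ) {z : ℂ} {ε : ℝ} (hε0 : 0 < ε) (hε2 : ε < 1/2)
    (hz : |z.im| < 1/2 - ε) :
    ‖gg jf k z‖ ≤ 16 / (ε * (|z.re| + ε)) := by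
  have hj' := hj k
  have hx : (0:ℝ) ≤ |z.re| := abs_nonneg _
  set j := jf k with hjdef
  set a := j - 1/2 + ε with hadef
  set x := |z.re| with hxdef
  set A := x + a with hAdef
  have ha : ε ≤ a := by rw [hadef]; linarith
  have hA0 : 0 < A := by rw [hAdef]; linarith
  have hDA : x + ε ≤ A := by rw [hAdef]; linarith
  have hD0 : 0 < x + ε := by linarith
  have hja : ε * j ≤ 2 * a := by
    rw [hadef]
    nlinarith [mul_nonneg (by linarith : (0:ℝ) ≤ 2 - ε) (by linarith : (0:ℝ) ≤ j - 1/2)]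
  have hden := factor_lower hj k hε0 hz
  have hnum : ‖(-2 * Complex.I * ((j : ℝ) : ℂ))‖ = 2 * j := by
    rw [norm_mul, norm_mul, Complex.norm_I, Complex.norm_real]
    simp [abs_of_pos (by linarith : (0:ℝ) < j)]
  rw [gg, norm_div, hnum]
  calc 2 * j / ‖z ^ 2 + ((j:ℝ):ℂ) ^ 2‖
      ≤ 2 * j / (A ^ 2 / 4) := by
        apply div_le_div_of_nonneg_left (by linarith) (by positivity) hden
    _ ≤ 16 / (ε * (x + ε)) := by
        rw [div_le_div_iff₀ (by positivity) (by positivity)]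
        have p1 : (ε * j) * (x + ε) ≤ (2 * a) * A :=
          mul_le_mul hja hDA (by linarith) (by nlinarith)
        have p2 : a * A ≤ A * A := mul_le_mul_of_nonneg_right (by rw [hAdef]; linarith) hA0.le
        nlinarith [p1, p2]

set_option maxHeartbeats 2000000 in
lemma gg1_bound (hj : ∀ k, 1/2 ≤ jf k) (k : ℕ) {z : ℂ} {ε : ℝ} (hε0 : 0 < ε) (hε2 : ε < 1/2)
    (hz : |z.im| < 1/2 - ε) :
    ‖gg1 jf k z‖ ≤ 64 / (ε ^ 2 * (|z.re| + ε) ^ 2) := by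
  have hj' := hj k
  have hx : (0:ℝ) ≤ |z.re| := abs_nonneg _
  set j := jf k with hjdef
  set a := j - 1/2 + ε with hadef
  set x := |z.re| with hxdef
  set A := x + a with hAdef
  have ha : ε ≤ a := by rw [hadef]; linarith
  have hA0 : 0 < A := by rw [hAdef]; linarith
  have hDA : x + ε ≤ A := by rw [hAdef]; linarith
  have hD0 : 0 < x + ε := by linarith
  have hja : ε * j ≤ 2 * A := by
    have : ε * j ≤ 2 * a := by
      rw [hadef]
      nlinarith [mul_nonneg (by linarith : (0:ℝ) ≤ 2 - ε) (by linarith : (0:ℝ) ≤ j - 1/2)]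
    rw [hAdef]; nlinarith
  have hzn : ‖z‖ ≤ x + 1/2 := by
    have h1 := Complex.norm_le_abs_re_add_abs_im z
    have h2 := abs_lt.mp hz
    rw [hxdef]
    cases abs_cases z.im <;> linarith
  have hzb : ε * ‖z‖ ≤ A / 2 := by
    have h1 : (2*ε) * ‖z‖ ≤ (2*ε) * (x + 1/2) :=
      mul_le_mul_of_nonneg_left hzn (by linarith)
    have h2 : (2*ε) * x ≤ 1 * x := mul_le_mul_of_nonneg_right (by linarith) hx
    rw [hAdef]; nlinarith
  have hden := factor_lower hj k hε0 hz
  have hden2 : (A ^ 2 / 4) ^ 2 ≤ ‖(z ^ 2 + ((j:ℝ):ℂ) ^ 2) ^ 2‖ := by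
    rw [norm_pow]
    exact pow_le_pow_left₀ (by positivity) hden 2
  have hnum : ‖(4 * Complex.I * ((j : ℝ) : ℂ) * z)‖ = 4 * j * ‖z‖ := by
    rw [norm_mul, norm_mul, norm_mul, Complex.norm_I, Complex.norm_real]
    simp [abs_of_pos (by linarith : (0:ℝ) < j)]
  rw [gg1, norm_div, hnum]
  calc 4 * j * ‖z‖ / ‖(z ^ 2 + ((j:ℝ):ℂ) ^ 2) ^ 2‖
      ≤ 4 * j * ‖z‖ / ((A ^ 2 / 4) ^ 2) := by
        apply div_le_div_of_nonneg_left _ (by positivity) hden2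
        have := norm_nonneg z
        nlinarith
    _ ≤ 64 / (ε ^ 2 * (x + ε) ^ 2) := by
        rw [div_le_div_iff₀ (by positivity) (by positivity)]
        have p1 : (ε * j) * (ε * ‖z‖) ≤ (2 * A) * (A / 2) :=
          mul_le_mul hja hzb (by positivity) (by linarith)
        have p2 : (x + ε) ^ 2 ≤ A ^ 2 := pow_le_pow_left₀ (by linarith) hDA 2
        have p3 : ((ε * j) * (ε * ‖z‖)) * ((x + ε) ^ 2) ≤ ((2 * A) * (A / 2)) * A ^ 2 := by
          apply mul_le_mul p1 p2 (by positivity) (by nlinarith)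
        nlinarith [p3]

set_option maxHeartbeats 2000000 in
lemma gg2_bound (hj : ∀ k, 1/2 ≤ jf k) (k : ℕ) {z : ℂ} {ε : ℝ} (hε0 : 0 < ε) (hε2 : ε < 1/2)
    (hz : |z.im| < 1/2 - ε) :
    ‖gg2 jf k z‖ ≤ 2560 / (ε ^ 3 * (|z.re| + ε) ^ 3) := by
  have hj' := hj k
  have hx : (0:ℝ) ≤ |z.re| := abs_nonneg _
  set j := jf k with hjdef
  set a := j - 1/2 + ε with hadef
  set x := |z.re| with hxdef
  set A := x + a with hAdef
  have ha : ε ≤ a := by rw [hadef]; linarith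
  have hA0 : 0 < A := by rw [hAdef]; linarith
  have hDA : x + ε ≤ A := by rw [hAdef]; linarith
  have hD0 : 0 < x + ε := by linarith
  have hja : ε * j ≤ 2 * A := by
    have : ε * j ≤ 2 * a := by
      rw [hadef]
      nlinarith [mul_nonneg (by linarith : (0:ℝ) ≤ 2 - ε) (by linarith : (0:ℝ) ≤ j - 1/2)]
    rw [hAdef]; nlinarith
  have hzn : ‖z‖ ≤ x + 1/2 := by
    have h1 := Complex.norm_le_abs_re_add_abs_im z
    have h2 := abs_lt.mp hz
    rw [hxdef]
    cases abs_cases z.im <;> linarith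
  have hzb : ε * ‖z‖ ≤ A / 2 := by
    have h1 : (2*ε) * ‖z‖ ≤ (2*ε) * (x + 1/2) :=
      mul_le_mul_of_nonneg_left hzn (by linarith)
    have h2 : (2*ε) * x ≤ 1 * x := mul_le_mul_of_nonneg_right (by linarith) hx
    rw [hAdef]; nlinarith
  have hden := factor_lower hj k hε0 hz
  have hden3 : (A ^ 2 / 4) ^ 3 ≤ ‖(z ^ 2 + ((j:ℝ):ℂ) ^ 2) ^ 3‖ := by
    rw [norm_pow]
    exact pow_le_pow_left₀ (by positivity) hden 3
  have hnum : ‖(4 * Complex.I * ((j : ℝ) : ℂ) * (((j:ℝ):ℂ) ^ 2 - 3 * z ^ 2))‖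
      ≤ 4 * j * (j ^ 2 + 3 * ‖z‖ ^ 2) := by
    rw [norm_mul, norm_mul, norm_mul, Complex.norm_I, Complex.norm_real]
    have h1 : ‖(((j:ℝ):ℂ) ^ 2 - 3 * z ^ 2)‖ ≤ j ^ 2 + 3 * ‖z‖ ^ 2 := by
      calc ‖(((j:ℝ):ℂ) ^ 2 - 3 * z ^ 2)‖ ≤ ‖(((j:ℝ):ℂ) ^ 2)‖ + ‖3 * z ^ 2‖ := norm_sub_le _ _
        _ ≤ j ^ 2 + 3 * ‖z‖ ^ 2 := by
            rw [norm_pow, norm_mul, norm_pow, Complex.norm_real]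
            have h3 : ‖(3:ℂ)‖ = 3 := by norm_num
            rw [h3, Real.norm_eq_abs, _root_.sq_abs]
    have h4 : ‖(4:ℂ)‖ = 4 := by norm_num
    rw [h4, Real.norm_eq_abs, abs_of_pos (show (0:ℝ) < j by linarith)]
    nlinarith [h1, norm_nonneg (((j:ℝ):ℂ) ^ 2 - 3 * z ^ 2)]
  rw [gg2, norm_div]
  have hdpos : 0 < ‖(z ^ 2 + ((j:ℝ):ℂ) ^ 2) ^ 3‖ :=
    norm_pos_iff.mpr (pow_ne_zero 3 (den3_ne hj k (by linarith : |z.im| < 1/2)))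
  calc ‖4 * Complex.I * ((j : ℝ) : ℂ) * (((j:ℝ):ℂ) ^ 2 - 3 * z ^ 2)‖ / ‖(z ^ 2 + ((j:ℝ):ℂ) ^ 2) ^ 3‖
      ≤ (4 * j * (j ^ 2 + 3 * ‖z‖ ^ 2)) / ((A ^ 2 / 4) ^ 3) := by
        apply div_le_div₀ (by positivity) hnum (by positivity) hden3
    _ ≤ 2560 / (ε ^ 3 * (x + ε) ^ 3) := by
        rw [div_le_div_iff₀ (by positivity) (by positivity)]
        have s1 : (ε * j) ^ 2 ≤ (2 * A) ^ 2 := pow_le_pow_left₀ (by positivity) hja 2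
        have s2 : (ε * ‖z‖) ^ 2 ≤ (A / 2) ^ 2 := pow_le_pow_left₀ (by positivity) hzb 2
        have h2 : ε ^ 2 * (j ^ 2 + 3 * ‖z‖ ^ 2) ≤ 5 * A ^ 2 := by nlinarith [s1, s2]
        have p1 : (ε * j) * (ε ^ 2 * (j ^ 2 + 3 * ‖z‖ ^ 2)) ≤ (2 * A) * (5 * A ^ 2) := by
          apply mul_le_mul hja h2 (by positivity) (by positivity)
        have p2 : (x + ε) ^ 3 ≤ A ^ 3 := pow_le_pow_left₀ (by linarith) hDA 3
        have p3 : ((ε * j) * (ε ^ 2 * (j ^ 2 + 3 * ‖z‖ ^ 2))) * ((x + ε) ^ 3)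
            ≤ ((2 * A) * (5 * A ^ 2)) * A ^ 3 := by
          apply mul_le_mul p1 p2 (by positivity) (by positivity)
        calc 4 * j * (j ^ 2 + 3 * ‖z‖ ^ 2) * (ε ^ 3 * (x + ε) ^ 3)
            = 4 * ((ε * j * (ε ^ 2 * (j ^ 2 + 3 * ‖z‖ ^ 2))) * (x + ε) ^ 3) := by ring
          _ ≤ 4 * ((2 * A * (5 * A ^ 2)) * A ^ 3) := by linarith [p3]
          _ = 2560 * (A ^ 2 / 4) ^ 3 := by ring

lemma prod_even_aux {ε : ℝ} (hε0 : 0 < ε) (hε2 : ε < 1/2) (K : ℕ) :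
    ∏ k ∈ range K, (((k:ℝ) + 1 - ε) / ((k:ℝ) + ε)) ≤ ((K:ℝ) + ε)/ε := by
  induction K with
  | zero => simp [div_self hε0.ne']
  | succ K ih =>
    rw [prod_range_succ]
    have hd : (0:ℝ) < (K:ℝ) + ε := by positivity
    have hK0 : (0:ℝ) ≤ (K:ℝ) := Nat.cast_nonneg K
    have hf : (0:ℝ) ≤ ((K:ℝ) + 1 - ε) / ((K:ℝ) + ε) := by
      apply div_nonneg _ hd.le
      linarith
    calc (∏ k ∈ range K, (((k:ℝ) + 1 - ε) / ((k:ℝ) + ε))) * (((K:ℝ) + 1 - ε) / ((K:ℝ) + ε))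
        ≤ (((K:ℝ) + ε)/ε) * (((K:ℝ) + 1 - ε) / ((K:ℝ) + ε)) :=
          mul_le_mul_of_nonneg_right ih hf
      _ = ((K:ℝ) + 1 - ε)/ε := by
          field_simp
      _ ≤ ((((K:ℕ)+1:ℕ):ℝ) + ε)/ε := by
          have : ((((K:ℕ)+1:ℕ)):ℝ) = (K:ℝ) + 1 := by push_cast; ring
          rw [this, div_le_div_iff₀ hε0 hε0]
          nlinarith

lemma prod_odd_aux (K : ℕ) :
    ∏ k ∈ range K, (((k:ℝ) + 3/2) / ((k:ℝ) + 1/2)) ≤ 2*(K:ℝ) + 1 := by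
  induction K with
  | zero => norm_num
  | succ K ih =>
    rw [prod_range_succ]
    have hd : (0:ℝ) < (K:ℝ) + 1/2 := by positivity
    have hK0 : (0:ℝ) ≤ (K:ℝ) := Nat.cast_nonneg K
    have hf : (0:ℝ) ≤ ((K:ℝ) + 3/2) / ((K:ℝ) + 1/2) := by positivity
    calc (∏ k ∈ range K, (((k:ℝ) + 3/2) / ((k:ℝ) + 1/2))) * (((K:ℝ) + 3/2) / ((K:ℝ) + 1/2))
        ≤ (2*(K:ℝ) + 1) * (((K:ℝ) + 3/2) / ((K:ℝ) + 1/2)) :=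
          mul_le_mul_of_nonneg_right ih hf
      _ = 2*((K:ℝ)+1) + 1 := by
          field_simp
          ring
      _ = 2*(((K:ℕ)+1:ℕ):ℝ) + 1 := by push_cast; ring

lemma QQ_bound (hj : ∀ k, 1/2 ≤ jf k) (K : ℕ) {z : ℂ} {ε : ℝ} (hε0 : 0 < ε) (hε2 : ε < 1/2)
    (hz : |z.im| < 1/2 - ε)
    (hB : ∏ k ∈ range K, ((jf k + (1/2 - ε)) / (jf k - (1/2 - ε))) ≤ (2*(K:ℝ)+1)/ε) :
    ‖QQ jf K z‖ ≤ (2*(K:ℝ)+1)/ε := by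
  rw [QQ, norm_mul, norm_prod]
  have h1 : ∏ k ∈ range K, ‖ff jf k z‖ ≤ (2*(K:ℝ)+1)/ε := by
    refine le_trans (Finset.prod_le_prod (fun k _ => norm_nonneg _)
      (fun k _ => ff_bound hj k hε0 hε2 hz)) hB
  have h2 : (0:ℝ) ≤ ∏ k ∈ range K, ‖ff jf k z‖ :=
    Finset.prod_nonneg fun k _ => norm_nonneg _
  calc ‖cpi‖ * ∏ k ∈ range K, ‖ff jf k z‖ ≤ 1 * ((2*(K:ℝ)+1)/ε) :=
        mul_le_mul cpi_norm h1 h2 zero_le_one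
    _ = (2*(K:ℝ)+1)/ε := one_mul _

lemma LL_bound (hj : ∀ k, 1/2 ≤ jf k) (K : ℕ) {z : ℂ} {ε : ℝ} (hε0 : 0 < ε) (hε2 : ε < 1/2)
    (hz : |z.im| < 1/2 - ε) :
    ‖LL jf K z‖ ≤ 16*(K:ℝ)/(ε * (|z.re| + ε)) := by
  have h := norm_sum_le (range K) (fun k => gg jf k z)
  have h2 : ∑ k ∈ range K, ‖gg jf k z‖ ≤ ∑ _k ∈ range K, 16/(ε * (|z.re| + ε)) :=
    Finset.sum_le_sum fun k _ => gg_bound hj k hε0 hε2 hz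
  rw [Finset.sum_const, card_range, nsmul_eq_mul] at h2
  calc ‖LL jf K z‖ ≤ ∑ k ∈ range K, ‖gg jf k z‖ := h
    _ ≤ (K:ℝ) * (16/(ε * (|z.re| + ε))) := h2
    _ = 16*(K:ℝ)/(ε * (|z.re| + ε)) := by ring

lemma LL1_bound (hj : ∀ k, 1/2 ≤ jf k) (K : ℕ) {z : ℂ} {ε : ℝ} (hε0 : 0 < ε) (hε2 : ε < 1/2)
    (hz : |z.im| < 1/2 - ε) :
    ‖LL1 jf K z‖ ≤ 64*(K:ℝ)/(ε^2 * (|z.re| + ε)^2) := by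
  have h := norm_sum_le (range K) (fun k => gg1 jf k z)
  have h2 : ∑ k ∈ range K, ‖gg1 jf k z‖ ≤ ∑ _k ∈ range K, 64/(ε^2 * (|z.re| + ε)^2) :=
    Finset.sum_le_sum fun k _ => gg1_bound hj k hε0 hε2 hz
  rw [Finset.sum_const, card_range, nsmul_eq_mul] at h2
  calc ‖LL1 jf K z‖ ≤ ∑ k ∈ range K, ‖gg1 jf k z‖ := h
    _ ≤ (K:ℝ) * (64/(ε^2 * (|z.re| + ε)^2)) := h2
    _ = 64*(K:ℝ)/(ε^2 * (|z.re| + ε)^2) := by ring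

lemma LL2_bound (hj : ∀ k, 1/2 ≤ jf k) (K : ℕ) {z : ℂ} {ε : ℝ} (hε0 : 0 < ε) (hε2 : ε < 1/2)
    (hz : |z.im| < 1/2 - ε) :
    ‖LL2 jf K z‖ ≤ 2560*(K:ℝ)/(ε^3 * (|z.re| + ε)^3) := by
  have h := norm_sum_le (range K) (fun k => gg2 jf k z)
  have h2 : ∑ k ∈ range K, ‖gg2 jf k z‖ ≤ ∑ _k ∈ range K, 2560/(ε^3 * (|z.re| + ε)^3) :=
    Finset.sum_le_sum fun k _ => gg2_bound hj k hε0 hε2 hz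
  rw [Finset.sum_const, card_range, nsmul_eq_mul] at h2
  calc ‖LL2 jf K z‖ ≤ ∑ k ∈ range K, ‖gg2 jf k z‖ := h
    _ ≤ (K:ℝ) * (2560/(ε^3 * (|z.re| + ε)^3)) := h2
    _ = 2560*(K:ℝ)/(ε^3 * (|z.re| + ε)^3) := by ring

lemma wrap2 {ε : ℝ} (hε0 : 0 < ε) (hε2 : ε < 1/2) {K : ℝ} (hK : 1 ≤ K)
    {c : ℝ} (hc : 0 ≤ c) (hcb : c ≤ 2^30) {p q : ℕ} (hp : p ≤ 6) (hq : q ≤ 8)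
    {X : ℝ} (hX : X ≤ c * K^p / ε^q) : X ≤ 2^30/ε^8 * (1 + K)^6 := by
  have hK0 : (0:ℝ) < K := by linarith
  calc X ≤ c * K^p / ε^q := hX
    _ ≤ 2^30 * (1+K)^6 / ε^8 := by
        rw [div_le_div_iff₀ (pow_pos hε0 q) (pow_pos hε0 8)]
        have e1 : ε^8 ≤ ε^q := pow_le_pow_of_le_one hε0.le (by linarith) hq
        have e2 : K^p ≤ (1+K)^6 := by
          calc K^p ≤ K^6 := pow_le_pow_right₀ hK hp
            _ ≤ (1+K)^6 := pow_le_pow_left₀ (by linarith) (by linarith) 6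
        have e3 : K^p * ε^8 ≤ (1+K)^6 * ε^q :=
          mul_le_mul e2 e1 (pow_nonneg hε0.le 8) (by positivity)
        have e4 : c * (K^p * ε^8) ≤ c * ((1+K)^6 * ε^q) :=
          mul_le_mul_of_nonneg_left e3 hc
        have e5 : c * ((1+K)^6 * ε^q) ≤ 2^30 * ((1+K)^6 * ε^q) :=
          mul_le_mul_of_nonneg_right hcb (by positivity)
        nlinarith [e4, e5]
    _ = 2^30/ε^8 * (1 + K)^6 := by ring

set_option maxHeartbeats 2000000 in
lemma master {ε : ℝ} (hε0 : 0 < ε) (hε2 : ε < 1/2) (α : ℕ) (hα : α ≤ 3)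
    (jf : ℕ → ℝ) (hj : ∀ k, 1/2 ≤ jf k) (K : ℕ) (hK : 1 ≤ K)
    (hB : ∏ k ∈ range K, ((jf k + (1/2 - ε)) / (jf k - (1/2 - ε))) ≤ (2*(K:ℝ)+1)/ε)
    (lam : ℂ) (hlam : |lam.im| < 1/2 - ε) :
    ‖iteratedDeriv α (QQ jf K) lam‖ ≤ 2^30/ε^8 * (1 + (K:ℝ)) ^ 6 / (1 + ‖lam‖) ^ α := by
  have hopen : IsOpen {z : ℂ | |z.im| < 1/2 - ε} :=
    isOpen_lt (continuous_abs.comp Complex.continuous_im) continuous_const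
  have hKR : (1:ℝ) ≤ (K:ℝ) := by exact_mod_cast hK
  set D := |lam.re| + ε with hDdef
  have hD0 : 0 < D := by have := abs_nonneg lam.re; rw [hDdef]; linarith
  have hP0 : (0:ℝ) < 1 + ‖lam‖ := by have := norm_nonneg lam; linarith
  have hP : 1 + ‖lam‖ ≤ 2*D/ε := by
    rw [le_div_iff₀ hε0]
    have h1 : ‖lam‖ ≤ |lam.re| + 1/2 := by
      have := Complex.norm_le_abs_re_add_abs_im lam
      have h2 := abs_lt.mp hlam
      cases abs_cases lam.im <;> linarith
    have h2 : ε * ‖lam‖ ≤ 1 * (|lam.re| + 1/2) :=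
      mul_le_mul (by linarith) h1 (norm_nonneg _) (by norm_num)
    rw [hDdef]
    nlinarith [abs_nonneg lam.re]
  -- norm bounds at lam
  have hQ : ‖QQ jf K lam‖ ≤ 3*(K:ℝ)/ε := by
    refine le_trans (QQ_bound hj K hε0 hε2 hlam hB) ?_
    apply div_le_div_of_nonneg_right ?_ ?_ <;> first | linarith | exact hε0
  have hL : ‖LL jf K lam‖ ≤ 16*(K:ℝ)/(ε*D) := LL_bound hj K hε0 hε2 hlam
  have hL1 : ‖LL1 jf K lam‖ ≤ 64*(K:ℝ)/(ε^2*D^2) := LL1_bound hj K hε0 hε2 hlam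
  have hL2 : ‖LL2 jf K lam‖ ≤ 2560*(K:ℝ)/(ε^3*D^3) := LL2_bound hj K hε0 hε2 hlam
  -- derivative facts
  have hstrip : ∀ z : ℂ, |z.im| < 1/2 - ε → |z.im| < 1/2 := fun z hz => by linarith
  have hQd : ∀ z : ℂ, |z.im| < 1/2 - ε →
      HasDerivAt (QQ jf K) (QQ jf K z * LL jf K z) z :=
    fun z hz => hasDerivAt_QQ hj K (hstrip z hz)
  have h2fun : ∀ z : ℂ, |z.im| < 1/2 - ε →
      iteratedDeriv 2 (QQ jf K) z = QQ jf K z * (LL jf K z^2 + LL1 jf K z) := by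
    intro z hz
    have hev : deriv (QQ jf K) =ᶠ[nhds z] fun w => QQ jf K w * LL jf K w := by
      filter_upwards [hopen.mem_nhds hz] with w hw
      exact (hQd w hw).deriv
    have hder := (hQd z hz).fun_mul (hasDerivAt_LL hj K (hstrip z hz))
    rw [show (2:ℕ) = 1+1 from rfl, iteratedDeriv_succ, iteratedDeriv_one,
      hev.deriv_eq, hder.deriv]
    ring
  have hPa : (0:ℝ) < (1 + ‖lam‖)^α := pow_pos hP0 α
  rw [le_div_iff₀ hPa]
  interval_cases α
  · -- α = 0
    rw [iteratedDeriv_zero, pow_zero, mul_one]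
    have hX : ‖QQ jf K lam‖ ≤ 3*(K:ℝ)^1/ε^1 := by simpa using hQ
    exact wrap2 hε0 hε2 hKR (by norm_num) (by norm_num) (by norm_num) (by norm_num) hX
  · -- α = 1
    have hd1 : iteratedDeriv 1 (QQ jf K) lam = QQ jf K lam * LL jf K lam := by
      rw [iteratedDeriv_one]; exact (hQd lam hlam).deriv
    rw [hd1, pow_one]
    have c1 : (0:ℝ) ≤ 3*(K:ℝ)/ε := by positivity
    have c2 : (0:ℝ) ≤ 16*(K:ℝ)/(ε*D) := div_nonneg (by positivity) (mul_nonneg hε0.le hD0.le)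
    have hQL : ‖QQ jf K lam * LL jf K lam‖ ≤ (3*(K:ℝ)/ε)*(16*(K:ℝ)/(ε*D)) := by
      rw [norm_mul]; exact mul_le_mul hQ hL (norm_nonneg _) c1
    have hX : ‖QQ jf K lam * LL jf K lam‖ * (1 + ‖lam‖) ≤ 96*(K:ℝ)^2/ε^3 := by
      calc ‖QQ jf K lam * LL jf K lam‖ * (1 + ‖lam‖)
          ≤ ((3*(K:ℝ)/ε)*(16*(K:ℝ)/(ε*D))) * (2*D/ε) :=
            mul_le_mul hQL hP hP0.le (mul_nonneg c1 c2)
        _ = 96*(K:ℝ)^2/ε^3 := by field_simp; ring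
    exact wrap2 hε0 hε2 hKR (by norm_num) (by norm_num) (by norm_num) (by norm_num) hX
  · -- α = 2
    rw [h2fun lam hlam]
    have c1 : (0:ℝ) ≤ 3*(K:ℝ)/ε := by positivity
    have c2 : (0:ℝ) ≤ (16*(K:ℝ)/(ε*D))^2 + 64*(K:ℝ)/(ε^2*D^2) := by
      have : (0:ℝ) ≤ 64*(K:ℝ)/(ε^2*D^2) :=
        div_nonneg (by positivity) (mul_nonneg (by positivity) (by positivity))
      positivity
    have hsum : ‖LL jf K lam^2 + LL1 jf K lam‖ ≤ (16*(K:ℝ)/(ε*D))^2 + 64*(K:ℝ)/(ε^2*D^2) := by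
      refine le_trans (norm_add_le _ _) (add_le_add ?_ hL1)
      rw [norm_pow]; exact pow_le_pow_left₀ (norm_nonneg _) hL 2
    have hQs : ‖QQ jf K lam * (LL jf K lam^2 + LL1 jf K lam)‖
        ≤ (3*(K:ℝ)/ε)*((16*(K:ℝ)/(ε*D))^2 + 64*(K:ℝ)/(ε^2*D^2)) := by
      rw [norm_mul]; exact mul_le_mul hQ hsum (norm_nonneg _) c1
    have hX : ‖QQ jf K lam * (LL jf K lam^2 + LL1 jf K lam)‖ * (1 + ‖lam‖)^2
        ≤ 3840*(K:ℝ)^3/ε^5 := by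
      calc ‖QQ jf K lam * (LL jf K lam^2 + LL1 jf K lam)‖ * (1 + ‖lam‖)^2
          ≤ ((3*(K:ℝ)/ε)*((16*(K:ℝ)/(ε*D))^2 + 64*(K:ℝ)/(ε^2*D^2))) * (2*D/ε)^2 :=
            mul_le_mul hQs (pow_le_pow_left₀ hP0.le hP 2) (pow_nonneg hP0.le 2)
              (mul_nonneg c1 c2)
        _ = (3072*(K:ℝ)^3 + 768*(K:ℝ)^2)/ε^5 := by field_simp; ring
        _ ≤ 3840*(K:ℝ)^3/ε^5 := by
            rw [div_le_div_iff₀ (pow_pos hε0 5) (pow_pos hε0 5)]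
            have hK23 : (K:ℝ)^2 ≤ (K:ℝ)^3 := pow_le_pow_right₀ hKR (by norm_num)
            nlinarith [pow_pos hε0 5, mul_le_mul_of_nonneg_right hK23 (pow_pos hε0 5).le]
    exact wrap2 hε0 hε2 hKR (by norm_num) (by norm_num) (by norm_num) (by norm_num) hX
  · -- α = 3
    have hd3 : iteratedDeriv 3 (QQ jf K) lam
        = QQ jf K lam * (LL jf K lam^3 + 3*LL jf K lam*LL1 jf K lam + LL2 jf K lam) := by
      have hev2 : iteratedDeriv 2 (QQ jf K) =ᶠ[nhds lam]
          (fun w => QQ jf K w * (LL jf K w^2 + LL1 jf K w)) := by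
        filter_upwards [hopen.mem_nhds hlam] with w hw using h2fun w hw
      have hder := (hQd lam hlam).fun_mul
        (((hasDerivAt_LL hj K (hstrip lam hlam)).fun_pow 2).fun_add (hasDerivAt_LL1 hj K (hstrip lam hlam)))
      beta_reduce at hder
      rw [show (3:ℕ) = 2+1 from rfl, iteratedDeriv_succ, hev2.deriv_eq, hder.deriv]
      push_cast
      ring
    rw [hd3]
    have c1 : (0:ℝ) ≤ 3*(K:ℝ)/ε := by positivity
    have cL : (0:ℝ) ≤ 16*(K:ℝ)/(ε*D) := div_nonneg (by positivity) (mul_nonneg hε0.le hD0.le)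
    have cL1 : (0:ℝ) ≤ 64*(K:ℝ)/(ε^2*D^2) :=
      div_nonneg (by positivity) (mul_nonneg (by positivity) (by positivity))
    have cL2 : (0:ℝ) ≤ 2560*(K:ℝ)/(ε^3*D^3) :=
      div_nonneg (by positivity) (mul_nonneg (by positivity) (pow_nonneg hD0.le 3))
    have c2 : (0:ℝ) ≤ (16*(K:ℝ)/(ε*D))^3 + 3*(16*(K:ℝ)/(ε*D))*(64*(K:ℝ)/(ε^2*D^2))
        + 2560*(K:ℝ)/(ε^3*D^3) := by
      have h3 : (0:ℝ) ≤ 3*(16*(K:ℝ)/(ε*D))*(64*(K:ℝ)/(ε^2*D^2)) := by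
        apply mul_nonneg (by linarith) cL1
      have := pow_nonneg cL 3
      linarith
    have hsum : ‖LL jf K lam^3 + 3*LL jf K lam*LL1 jf K lam + LL2 jf K lam‖
        ≤ (16*(K:ℝ)/(ε*D))^3 + 3*(16*(K:ℝ)/(ε*D))*(64*(K:ℝ)/(ε^2*D^2))
          + 2560*(K:ℝ)/(ε^3*D^3) := by
      refine le_trans (norm_add_le _ _) (add_le_add (le_trans (norm_add_le _ _)
        (add_le_add ?_ ?_)) hL2)
      · rw [norm_pow]; exact pow_le_pow_left₀ (norm_nonneg _) hL 3
      · rw [norm_mul, norm_mul]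
        have h3 : ‖(3:ℂ)‖ = 3 := by norm_num
        rw [h3]
        have hm : 3 * ‖LL jf K lam‖ ≤ 3 * (16*(K:ℝ)/(ε*D)) := by linarith
        exact mul_le_mul hm hL1 (norm_nonneg _) (by linarith)
    have hQs : ‖QQ jf K lam * (LL jf K lam^3 + 3*LL jf K lam*LL1 jf K lam + LL2 jf K lam)‖
        ≤ (3*(K:ℝ)/ε)*((16*(K:ℝ)/(ε*D))^3 + 3*(16*(K:ℝ)/(ε*D))*(64*(K:ℝ)/(ε^2*D^2))
          + 2560*(K:ℝ)/(ε^3*D^3)) := by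
      rw [norm_mul]; exact mul_le_mul hQ hsum (norm_nonneg _) c1
    have hX : ‖QQ jf K lam * (LL jf K lam^3 + 3*LL jf K lam*LL1 jf K lam + LL2 jf K lam)‖
        * (1 + ‖lam‖)^3 ≤ 262144*(K:ℝ)^4/ε^7 := by
      calc ‖QQ jf K lam * (LL jf K lam^3 + 3*LL jf K lam*LL1 jf K lam + LL2 jf K lam)‖
            * (1 + ‖lam‖)^3
          ≤ ((3*(K:ℝ)/ε)*((16*(K:ℝ)/(ε*D))^3 + 3*(16*(K:ℝ)/(ε*D))*(64*(K:ℝ)/(ε^2*D^2))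
              + 2560*(K:ℝ)/(ε^3*D^3))) * (2*D/ε)^3 :=
            mul_le_mul hQs (pow_le_pow_left₀ hP0.le hP 3) (pow_nonneg hP0.le 3)
              (mul_nonneg c1 c2)
        _ = (98304*(K:ℝ)^4 + 73728*(K:ℝ)^3 + 61440*(K:ℝ)^2)/ε^7 := by field_simp; ring
        _ ≤ 262144*(K:ℝ)^4/ε^7 := by
            rw [div_le_div_iff₀ (pow_pos hε0 7) (pow_pos hε0 7)]
            have hK34 : (K:ℝ)^3 ≤ (K:ℝ)^4 := pow_le_pow_right₀ hKR (by norm_num)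
            have hK24 : (K:ℝ)^2 ≤ (K:ℝ)^4 := pow_le_pow_right₀ hKR (by norm_num)
            nlinarith [mul_le_mul_of_nonneg_right hK34 (pow_pos hε0 7).le,
              mul_le_mul_of_nonneg_right hK24 (pow_pos hε0 7).le,
              mul_nonneg (pow_nonneg (Nat.cast_nonneg K : (0:ℝ) ≤ (K:ℝ)) 4) (pow_pos hε0 7).le]
    exact wrap2 hε0 hε2 hKR (by norm_num) (by norm_num) (by norm_num) (by norm_num) hX

end Qaux

/-- Derivative bounds for `Q_n(λ) = π^{−1/2} ∏ (iλ − j)/(iλ + j)`, with `n = m/2 ≥ 3`,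
the product over `j = 1/2, 3/2, …, n − 1/2` when `n ∈ ℕ` and over `j = 1, …, n − 1/2`
when `n` is a half-odd-integer. -/
theorem stmt10 (ε : ℝ) (hε : 0 < ε ∧ ε < 1/2) (α : ℕ) (hα : α ≤ 3) :
    ∃ C : ℝ, 0 < C ∧ ∀ m : ℕ, 6 ≤ m → ∀ lam : ℂ, |lam.im| < 1/2 - ε →
      ‖iteratedDeriv α (fun z : ℂ =>
          (Real.pi : ℂ) ^ (-(1/2 : ℂ)) *
          (if Even m then
            ∏ k ∈ Finset.range (m/2),
              (Complex.I * z - ((k:ℂ) + 1/2)) / (Complex.I * z + ((k:ℂ) + 1/2))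
          else
            ∏ k ∈ Finset.range (m/2),
              (Complex.I * z - ((k:ℂ) + 1)) / (Complex.I * z + ((k:ℂ) + 1)))) lam‖
        ≤ C * (1 + (m:ℝ)/2) ^ 6 / (1 + ‖lam‖) ^ α := by
  obtain ⟨hε0, hε2⟩ := hε
  refine ⟨2^30/ε^8, by positivity, ?_⟩
  intro m h6 lam hlam
  set K := m / 2 with hKdef
  have hK : 1 ≤ K := by omega
  have hKm : ((K:ℕ):ℝ) ≤ (m:ℝ)/2 := by
    rw [hKdef]
    exact_mod_cast Nat.cast_div_le
  have hP0 : (0:ℝ) < 1 + ‖lam‖ := by have := norm_nonneg lam; linarith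
  have hmono : ∀ X : ℝ, X ≤ 2^30/ε^8 * (1 + (K:ℝ))^6 / (1 + ‖lam‖)^α →
      X ≤ 2^30/ε^8 * (1 + (m:ℝ)/2)^6 / (1 + ‖lam‖)^α := by
    intro X hX
    refine le_trans hX ?_
    have hb : (1:ℝ) + (K:ℝ) ≤ 1 + (m:ℝ)/2 := by linarith [hKm]
    have hbn : (0:ℝ) ≤ 1 + (K:ℝ) := by positivity
    have h6p : ((1:ℝ)+(K:ℝ))^6 ≤ (1+(m:ℝ)/2)^6 := pow_le_pow_left₀ hbn hb 6
    have hmul : 2^30/ε^8 * ((1:ℝ)+(K:ℝ))^6 ≤ 2^30/ε^8 * (1+(m:ℝ)/2)^6 :=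
      mul_le_mul_of_nonneg_left h6p (by positivity)
    exact div_le_div_of_nonneg_right hmul (pow_nonneg hP0.le α)
  by_cases hm : Even m
  · simp only [if_pos hm]
    set jf : ℕ → ℝ := fun k => (k:ℝ) + 1/2 with hjf
    have hj : ∀ k, 1/2 ≤ jf k := by
      intro k; have : (0:ℝ) ≤ (k:ℝ) := Nat.cast_nonneg k; simp only [hjf]; linarith
    have hB : ∏ k ∈ Finset.range K, ((jf k + (1/2 - ε)) / (jf k - (1/2 - ε)))
        ≤ (2*(K:ℝ)+1)/ε := by
      have heq : ∏ k ∈ Finset.range K, ((jf k + (1/2 - ε)) / (jf k - (1/2 - ε)))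
          = ∏ k ∈ Finset.range K, (((k:ℝ) + 1 - ε) / ((k:ℝ) + ε)) := by
        refine Finset.prod_congr rfl fun k _ => ?_
        rw [hjf]
        ring_nf
      rw [heq]
      refine le_trans (prod_even_aux hε0 hε2 K) ?_
      apply div_le_div_of_nonneg_right ?_ hε0.le
      linarith [(by exact_mod_cast hK : (1:ℝ) ≤ (K:ℝ))]
    have hfun : (fun z : ℂ => (Real.pi : ℂ) ^ (-(1/2 : ℂ)) *
        ∏ k ∈ Finset.range (m/2),
          (Complex.I * z - ((k:ℂ) + 1/2)) / (Complex.I * z + ((k:ℂ) + 1/2)))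
        = QQ jf K := by
      funext z
      rw [QQ, cpi]
      congr 1
      refine Finset.prod_congr rfl fun k _ => ?_
      rw [ff, hjf]
      push_cast
      ring_nf
    rw [hfun]
    exact hmono _ (master hε0 hε2 α hα jf hj K hK hB lam hlam)
  · simp only [if_neg hm]
    set jf : ℕ → ℝ := fun k => (k:ℝ) + 1 with hjf
    have hj : ∀ k, 1/2 ≤ jf k := by
      intro k; have : (0:ℝ) ≤ (k:ℝ) := Nat.cast_nonneg k; simp only [hjf]; linarith
    have hB : ∏ k ∈ Finset.range K, ((jf k + (1/2 - ε)) / (jf k - (1/2 - ε)))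
        ≤ (2*(K:ℝ)+1)/ε := by
      have h1 : ∏ k ∈ Finset.range K, ((jf k + (1/2 - ε)) / (jf k - (1/2 - ε)))
          ≤ ∏ k ∈ Finset.range K, (((k:ℝ) + 3/2) / ((k:ℝ) + 1/2)) := by
        refine Finset.prod_le_prod (fun k _ => ?_) (fun k _ => ?_)
        · have : (0:ℝ) ≤ (k:ℝ) := Nat.cast_nonneg k
          apply div_nonneg <;> rw [hjf] <;> simp <;> linarith
        · have hk0 : (0:ℝ) ≤ (k:ℝ) := Nat.cast_nonneg k
          rw [hjf]
          apply div_le_div₀ (by linarith) (by simp; linarith) (by linarith) (by simp; linarith)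
      refine le_trans h1 (le_trans (prod_odd_aux K) ?_)
      rw [le_div_iff₀ hε0]
      have hKR : (1:ℝ) ≤ (K:ℝ) := by exact_mod_cast hK
      nlinarith
    have hfun : (fun z : ℂ => (Real.pi : ℂ) ^ (-(1/2 : ℂ)) *
        ∏ k ∈ Finset.range (m/2),
          (Complex.I * z - ((k:ℂ) + 1)) / (Complex.I * z + ((k:ℂ) + 1)))
        = QQ jf K := by
      funext z
      rw [QQ, cpi]
      congr 1
      refine Finset.prod_congr rfl fun k _ => ?_
      rw [ff, hjf]
      push_cast
      ring_nf
    rw [hfun]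
    exact hmono _ (master hε0 hε2 α hα jf hj K hK hB lam hlam)
end

section
/- Let g(ξ) = (1/2) ∫_{−1}^{1} (1−u²)^{−1/2} F(uξ) du for ξ > 0, where F : ℝ → ℂ is C² with F(λ) = 0 for |λ| ≤ 1, |F(λ)| ≤ M(1+|λ|), |F'(λ)| ≤ M, |F''(λ)| ≤ M(1+|λ|)^{−1}. Set h(ξ) = g'(|ξ|) = (1/2)∫_{−1}^1 (1−u²)^{−1/2} u F'(u|ξ|) du. Then sup_ξ (|h(ξ)| + |ξ h'(ξ)|) ≤ C M for an absolute constant C. -/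
open MeasureTheory Real Set Filter
open scoped Interval

lemma rpow_neg_half_eq (x : ℝ) : x ^ (-(1/2) : ℝ) = (Real.sqrt x)⁻¹ := by
  rcases lt_or_ge x 0 with hx | hx
  · rw [Real.rpow_def_of_neg hx]
    have h1 : Real.cos (-(1/2) * π) = 0 := by
      have : (-(1/2) : ℝ) * π = -(π/2) := by ring
      rw [this, Real.cos_neg, Real.cos_pi_div_two]
    rw [h1, mul_zero, Real.sqrt_eq_zero_of_nonpos hx.le, inv_zero]
  · rw [Real.rpow_neg hx, Real.sqrt_eq_rpow]

lemma V_hasDeriv {u : ℝ} (hu : u ∈ Set.Ioo (-1:ℝ) 1) :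
    HasDerivAt Real.arcsin (√(1 - u^2))⁻¹ u := by
  simpa [one_div] using Real.hasDerivAt_arcsin hu.1.ne' hu.2.ne

lemma V_intInt : IntervalIntegrable (fun u : ℝ => (√(1 - u^2))⁻¹) volume (-1) 1 := by
  have hmm : min (-1:ℝ) 1 = -1 := by norm_num
  have hmx : max (-1:ℝ) 1 = 1 := by norm_num
  apply intervalIntegral.intervalIntegrable_deriv_of_nonneg (g := Real.arcsin)
  · exact Real.continuous_arcsin.continuousOn
  · intro x hx; rw [hmm, hmx] at hx; exact V_hasDeriv hx
  · intro x hx; positivity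

lemma V_integral : ∫ u in (-1:ℝ)..1, (√(1 - u^2))⁻¹ = π := by
  rw [intervalIntegral.integral_eq_sub_of_hasDerivAt_of_le (by norm_num)
    Real.continuous_arcsin.continuousOn (fun x hx => V_hasDeriv hx) V_intInt]
  rw [Real.arcsin_one, Real.arcsin_neg_one]; ring

theorem stmt16 : ∃ C : ℝ, 0 < C ∧ ∀ M : ℝ, 0 < M → ∀ F : ℝ → ℂ, ContDiff ℝ 2 F →
    (∀ lam : ℝ, |lam| ≤ 1 → F lam = 0) →
    (∀ lam : ℝ, ‖F lam‖ ≤ M * (1 + |lam|)) →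
    (∀ lam : ℝ, ‖deriv F lam‖ ≤ M) →
    (∀ lam : ℝ, ‖deriv (deriv F) lam‖ ≤ M / (1 + |lam|)) →
    ∀ ξ : ℝ,
      ‖(fun x : ℝ => (1/2 : ℂ) *
          ∫ u in (-1:ℝ)..1, (((1-u^2) ^ (-(1/2):ℝ) * u : ℝ) : ℂ) * deriv F (u * |x|)) ξ‖
        + |ξ| * ‖deriv (fun x : ℝ => (1/2 : ℂ) *
          ∫ u in (-1:ℝ)..1, (((1-u^2) ^ (-(1/2):ℝ) * u : ℝ) : ℂ) * deriv F (u * |x|)) ξ‖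
      ≤ C * M := by
  refine ⟨6, by norm_num, ?_⟩
  intro M hM F hF hzero hF0 hF1 hF2 ξ
  simp only [rpow_neg_half_eq]
  set V : ℝ → ℝ := fun u => (√(1 - u^2))⁻¹ with hVdef
  have hVnn : ∀ u, 0 ≤ V u := fun u => inv_nonneg.mpr (Real.sqrt_nonneg _)
  set f : ℝ → ℂ :=
    fun x => (1/2 : ℂ) * ∫ u in (-1:ℝ)..1, ((V u * u : ℝ) : ℂ) * deriv F (u * |x|) with hfdef
  show ‖f ξ‖ + |ξ| * ‖deriv f ξ‖ ≤ 6 * M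
  -- regularity of F
  have h1 : ContDiff ℝ 1 (deriv F) := by
    have h11 : ContDiff ℝ ((1:ℕ) + 1) F := by exact_mod_cast hF
    exact_mod_cast (contDiff_succ_iff_deriv.mp h11).2.2
  have hFd' : Differentiable ℝ (deriv F) := h1.differentiable one_ne_zero
  have hcont1 : Continuous (deriv F) := hFd'.continuous
  have hcont2 : Continuous (deriv (deriv F)) := h1.continuous_deriv le_rfl
  have hder0 : ∀ lam : ℝ, |lam| < 1 → deriv F lam = 0 := by
    intro lam hlam
    have hop : IsOpen {y : ℝ | |y| < 1} := isOpen_lt continuous_abs continuous_const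
    have hev : F =ᶠ[nhds lam] (fun _ => 0) := by
      filter_upwards [hop.mem_nhds hlam] with y hy using hzero y (le_of_lt hy)
    rw [hev.deriv_eq, deriv_const]
  rcases lt_or_ge |ξ| 1 with hξ | hξ
  · -- small |ξ|: f vanishes near ξ
    have hop : IsOpen {x : ℝ | |x| < 1} := isOpen_lt continuous_abs continuous_const
    have hev : f =ᶠ[nhds ξ] (fun _ => 0) := by
      filter_upwards [hop.mem_nhds hξ] with x hx
      have heq : EqOn (fun u : ℝ => ((V u * u : ℝ) : ℂ) * deriv F (u * |x|))
          (fun _ => (0:ℂ)) (Set.uIcc (-1:ℝ) 1) := by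
        intro u hu
        rw [Set.uIcc_of_le (by norm_num : (-1:ℝ) ≤ 1)] at hu
        have h1u : |u| ≤ 1 := abs_le.mpr ⟨hu.1, hu.2⟩
        have : abs (u * abs x) < 1 := by
          rw [abs_mul, abs_abs]
          calc |u| * |x| ≤ 1 * |x| := mul_le_mul_of_nonneg_right h1u (abs_nonneg x)
          _ = |x| := one_mul _
          _ < 1 := hx
        simp [hder0 _ this]
      simp only [hfdef]
      rw [intervalIntegral.integral_congr heq, intervalIntegral.integral_zero, mul_zero]
    have e1 : f ξ = 0 := hev.self_of_nhds
    have e2 : deriv f ξ = 0 := by rw [hev.deriv_eq, deriv_const]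
    rw [e1, e2]
    simp only [norm_zero, mul_zero, add_zero]
    positivity
  · -- large |ξ|
    have hξpos : (0:ℝ) < |ξ| := by linarith
    set s : ℝ := if 0 ≤ ξ then 1 else -1 with hs
    have hball : ∀ x ∈ Metric.ball ξ (1/2:ℝ), |x| = s * x ∧ |ξ| ≤ 2 * |x| := by
      intro x hx
      rw [Metric.mem_ball, Real.dist_eq] at hx
      obtain ⟨hx1, hx2⟩ := abs_lt.mp hx
      rcases le_or_gt 0 ξ with h0 | h0
      · have hξ1 : (1:ℝ) ≤ ξ := by rwa [abs_of_nonneg h0] at hξ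
        have hxpos : (0:ℝ) < x := by linarith
        rw [hs, if_pos h0, one_mul, abs_of_pos hxpos, abs_of_nonneg h0]
        exact ⟨rfl, by linarith⟩
      · have hξ1 : ξ ≤ -1 := by
          rw [abs_of_neg h0] at hξ; linarith
        have hxneg : x < 0 := by linarith
        rw [hs, if_neg (not_le.mpr h0), abs_of_neg hxneg, abs_of_neg h0]
        constructor
        · ring
        · linarith
    set Φ : ℝ → ℝ → ℂ := fun x u => ((V u * u : ℝ) : ℂ) * deriv F (u * |x|) with hΦdef
    set Φ' : ℝ → ℝ → ℂ :=
      fun x u => ((V u * u : ℝ) : ℂ) * ((u * s) • deriv (deriv F) (u * |x|)) with hΦ'def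
    have hVmeas : Measurable fun u : ℝ => ((V u * u : ℝ) : ℂ) := by
      apply Complex.measurable_ofReal.comp
      exact (((continuous_const.sub (continuous_pow 2)).sqrt.measurable).inv).mul measurable_id
    have hmeasΦ : ∀ x : ℝ, AEStronglyMeasurable (Φ x) (volume.restrict (Ι (-1:ℝ) 1)) := by
      intro x
      exact ((hVmeas.mul
        ((hcont1.comp (continuous_id.mul continuous_const)).measurable)).aestronglyMeasurable)
    have hmeasΦ' : AEStronglyMeasurable (Φ' ξ) (volume.restrict (Ι (-1:ℝ) 1)) := by
      refine (hVmeas.mul ?_).aestronglyMeasurable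
      exact ((continuous_id.mul continuous_const).smul
        (hcont2.comp (continuous_id.mul continuous_const))).measurable
    have hIu : Ι (-1:ℝ) 1 = Set.Ioc (-1:ℝ) 1 := Set.uIoc_of_le (by norm_num)
    have habs : ∀ u ∈ Ι (-1:ℝ) 1, |u| ≤ 1 := by
      intro u hu; rw [hIu] at hu; exact abs_le.mpr ⟨hu.1.le, hu.2⟩
    have hMV : IntervalIntegrable (fun u => M * V u) volume (-1) 1 := V_intInt.const_mul M
    have hnormΦ : ∀ x : ℝ, ∀ u ∈ Ι (-1:ℝ) 1, ‖Φ x u‖ ≤ M * V u := by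
      intro x u hu
      have : ‖Φ x u‖ = V u * |u| * ‖deriv F (u * |x|)‖ := by
        rw [hΦdef]
        simp only [norm_mul, Complex.norm_real, Real.norm_eq_abs, abs_mul,
          abs_of_nonneg (hVnn u)]
      rw [this]
      calc V u * |u| * ‖deriv F (u * |x|)‖ ≤ V u * 1 * M := by
            apply mul_le_mul (mul_le_mul_of_nonneg_left (habs u hu) (hVnn u)) (hF1 _)
              (norm_nonneg _) (by positivity)
        _ = M * V u := by ring
    have hΦint : ∀ x, IntervalIntegrable (Φ x) volume (-1) 1 := by
      intro x
      apply hMV.mono_fun (hmeasΦ x)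
      filter_upwards [ae_restrict_mem measurableSet_uIoc] with u hu
      rw [Real.norm_eq_abs, abs_of_nonneg (by positivity)]
      exact hnormΦ x u hu
    -- bound on Φ'
    have hnormΦ' : ∀ u ∈ Ι (-1:ℝ) 1, ∀ x ∈ Metric.ball ξ (1/2:ℝ),
        ‖Φ' x u‖ ≤ 2 * M / |ξ| * V u := by
      intro u hu x hx
      obtain ⟨-, hx2⟩ := hball x hx
      have hseq : |s| = 1 := by rw [hs]; split <;> simp
      have h1 : ‖Φ' x u‖ = V u * |u| * (|u| * ‖deriv (deriv F) (u * |x|)‖) := by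
        rw [hΦ'def]
        simp only [norm_mul, Complex.norm_real, Real.norm_eq_abs, norm_smul, abs_mul,
          abs_of_nonneg (hVnn u), hseq, mul_one, Real.norm_eq_abs]
      rw [h1]
      have h2 : ‖deriv (deriv F) (u * |x|)‖ ≤ M / (1 + |u| * |x|) := by
        have := hF2 (u * |x|); rwa [abs_mul, abs_abs] at this
      have hden : (0:ℝ) < 1 + |u| * |x| := by positivity
      have hu1 : |u| ≤ 1 := habs u hu
      calc V u * |u| * (|u| * ‖deriv (deriv F) (u * |x|)‖)
          ≤ V u * |u| * (|u| * (M / (1 + |u| * |x|))) := by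
            apply mul_le_mul_of_nonneg_left (mul_le_mul_of_nonneg_left h2 (abs_nonneg u))
              (by positivity)
        _ = V u * (|u| * (|u| * (M / (1 + |u| * |x|)))) := by ring
        _ ≤ V u * (2 * M / |ξ|) := by
            apply mul_le_mul_of_nonneg_left ?key (hVnn u)
            have hrw2 : |u| * (|u| * (M / (1 + |u| * |x|))) = |u| * |u| * M / (1 + |u| * |x|) := by
              ring
            rw [hrw2, div_le_div_iff₀ hden hξpos]
            nlinarith [abs_nonneg u, abs_nonneg x, hM.le, hx2, hu1,
              mul_nonneg (mul_nonneg (mul_nonneg (abs_nonneg u) (abs_nonneg u)) hM.le)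
                (sub_nonneg.mpr hx2),
              mul_nonneg (mul_nonneg (mul_nonneg (sub_nonneg.mpr hu1) (abs_nonneg u)) hM.le)
                (abs_nonneg x),
              mul_nonneg hM.le (mul_nonneg (abs_nonneg u) (abs_nonneg x))]
        _ = 2 * M / |ξ| * V u := by ring
    have hbnd_int : IntervalIntegrable (fun u => 2 * M / |ξ| * V u) volume (-1) 1 :=
      V_intInt.const_mul _
    have hdiff : ∀ u ∈ Ι (-1:ℝ) 1, ∀ x ∈ Metric.ball ξ (1/2:ℝ),
        HasDerivAt (fun y => Φ y u) (Φ' x u) x := by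
      intro u hu x hx
      have hlin : HasDerivAt (fun y : ℝ => (u * s) * y) (u * s) x := by
        simpa using (hasDerivAt_id x).const_mul (u * s)
      have hg : HasDerivAt (fun y : ℝ => u * |y|) (u * s) x := by
        apply hlin.congr_of_eventuallyEq
        filter_upwards [Metric.isOpen_ball.mem_nhds hx] with y hy
        rw [(hball y hy).1]; ring
      have hcomp : HasDerivAt (fun y : ℝ => deriv F (u * |y|))
          ((u * s) • deriv (deriv F) (u * |x|)) x :=
        by have := HasDerivAt.scomp x ((hFd' (u * |x|)).hasDerivAt) hg; exact this
      exact hcomp.const_mul _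
    obtain ⟨-, hder⟩ := intervalIntegral.hasDerivAt_integral_of_dominated_loc_of_deriv_le
      (F := Φ) (F' := Φ') (x₀ := ξ) (bound := fun u => 2 * M / |ξ| * V u)
      (Metric.ball_mem_nhds ξ (by norm_num : (0:ℝ) < 1/2))
      (Filter.Eventually.of_forall hmeasΦ) (hΦint ξ) hmeasΦ'
      (MeasureTheory.ae_of_all _ fun u hu x hx => hnormΦ' u hu x hx)
      hbnd_int
      (MeasureTheory.ae_of_all _ fun u hu x hx => hdiff u hu x hx)
    have hderf : HasDerivAt f ((1/2 : ℂ) * ∫ u in (-1:ℝ)..1, Φ' ξ u) ξ :=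
      hder.const_mul (1/2 : ℂ)
    have hderiv_eq : deriv f ξ = (1/2 : ℂ) * ∫ u in (-1:ℝ)..1, Φ' ξ u := hderf.deriv
    have hhalf : ‖(1/2 : ℂ)‖ = 1/2 := by
      rw [norm_div, norm_one]; simp
    have hI1 : ‖∫ u in (-1:ℝ)..1, Φ ξ u‖ ≤ M * π := by
      have hb := intervalIntegral.norm_integral_le_abs_of_norm_le (f := Φ ξ)
        (g := fun u => M * V u) (μ := volume)
        (by filter_upwards [ae_restrict_mem measurableSet_uIoc] with u hu using hnormΦ ξ u hu)
        hMV
      calc ‖∫ u in (-1:ℝ)..1, Φ ξ u‖ ≤ |∫ u in (-1:ℝ)..1, M * V u| := hb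
        _ = M * π := by
            rw [intervalIntegral.integral_const_mul, V_integral, abs_of_nonneg (by positivity)]
    have hI2 : ‖∫ u in (-1:ℝ)..1, Φ' ξ u‖ ≤ 2 * M / |ξ| * π := by
      have hb := intervalIntegral.norm_integral_le_abs_of_norm_le (f := Φ' ξ)
        (g := fun u => 2 * M / |ξ| * V u) (μ := volume)
        (by filter_upwards [ae_restrict_mem measurableSet_uIoc] with u hu
            exact hnormΦ' u hu ξ (Metric.mem_ball_self (by norm_num)))
        hbnd_int
      calc ‖∫ u in (-1:ℝ)..1, Φ' ξ u‖ ≤ |∫ u in (-1:ℝ)..1, 2 * M / |ξ| * V u| := hb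
        _ = 2 * M / |ξ| * π := by
            rw [intervalIntegral.integral_const_mul, V_integral, abs_of_nonneg (by positivity)]
    have hfval : f ξ = (1/2 : ℂ) * ∫ u in (-1:ℝ)..1, Φ ξ u := rfl
    have hfξ : ‖f ξ‖ ≤ 1/2 * (M * π) := by
      rw [hfval, norm_mul, hhalf]
      exact mul_le_mul_of_nonneg_left hI1 (by norm_num)
    have hdξ : |ξ| * ‖deriv f ξ‖ ≤ M * π := by
      rw [hderiv_eq, norm_mul, hhalf]
      calc |ξ| * (1/2 * ‖∫ u in (-1:ℝ)..1, Φ' ξ u‖)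
          ≤ |ξ| * (1/2 * (2 * M / |ξ| * π)) := by
            apply mul_le_mul_of_nonneg_left (mul_le_mul_of_nonneg_left hI2 (by norm_num))
              (abs_nonneg ξ)
        _ = M * π := by field_simp
    calc ‖f ξ‖ + |ξ| * ‖deriv f ξ‖ ≤ 1/2 * (M * π) + M * π := add_le_add hfξ hdξ
      _ = 3/2 * π * M := by ring
      _ ≤ 6 * M := by nlinarith [Real.pi_le_four, hM.le,
          mul_le_mul_of_nonneg_right Real.pi_le_four hM.le]
end
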